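/- For every twice continuously differentiable function σ : ℍ → ℍ, the identity D̄(D̄σ) − 2·D̄σ = −(L₁(L₁σ) + L₂(L₂σ) + L₃(L₃σ)) holds. -/

import Mathlib

open Quaternion MvPolynomial

noncomputable section

/-- The standard imaginary quaternion units. -/
def e1 : ℍ[ℝ] := ⟨0, 1, 0, 0⟩
def e2 : ℍ[ℝ] := ⟨0, 0, 1, 0⟩
def e3 : ℍ[ℝ] := ⟨0, 0, 0, 1⟩

/-- Infinitesimal right translation: `(L_v σ)(x) = Dσ(x)[x·v]`. -/
def Lop (v : ℍ[ℝ]) (σ : ℍ[ℝ] → ℍ[ℝ]) : ℍ[ℝ] → ℍ[ℝ] :=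
  fun x => fderiv ℝ σ x (x * v)

/-- The operator `D̄σ = −((L₁σ)·e₁ + (L₂σ)·e₂ + (L₃σ)·e₃)`. -/
def Dbar (σ : ℍ[ℝ] → ℍ[ℝ]) : ℍ[ℝ] → ℍ[ℝ] :=
  fun x => -(Lop e1 σ x * e1 + Lop e2 σ x * e2 + Lop e3 σ x * e3)

/-- The four real coordinates of a quaternion. -/
def coords (x : ℍ[ℝ]) : Fin 4 → ℝ := ![x.re, x.imI, x.imJ, x.imK]

/-- `σ ∈ V_k`: each of the four real components of `σ` is (given by) a harmonic
polynomial on `ℝ⁴`, homogeneous of degree `k`. -/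
def memVk (k : ℕ) (σ : ℍ[ℝ] → ℍ[ℝ]) : Prop :=
  ∀ c : Fin 4, ∃ P : MvPolynomial (Fin 4) ℝ,
    P.IsHomogeneous k ∧ (∑ i : Fin 4, pderiv i (pderiv i P)) = 0 ∧
    ∀ x : ℍ[ℝ], eval (coords x) P = coords (σ x) c

-- unit multiplication table
lemma e1e1 : e1 * e1 = -1 := by ext <;> simp [Quaternion.re_mul, Quaternion.imI_mul, Quaternion.imJ_mul, Quaternion.imK_mul] <;> simp [e1]
lemma e2e2 : e2 * e2 = -1 := by ext <;> simp [Quaternion.re_mul, Quaternion.imI_mul, Quaternion.imJ_mul, Quaternion.imK_mul] <;> simp [e2]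
lemma e3e3 : e3 * e3 = -1 := by ext <;> simp [Quaternion.re_mul, Quaternion.imI_mul, Quaternion.imJ_mul, Quaternion.imK_mul] <;> simp [e3]
lemma e1e2 : e1 * e2 = e3 := by ext <;> simp [Quaternion.re_mul, Quaternion.imI_mul, Quaternion.imJ_mul, Quaternion.imK_mul] <;> simp [e1, e2, e3]
lemma e2e1 : e2 * e1 = -e3 := by ext <;> simp [Quaternion.re_mul, Quaternion.imI_mul, Quaternion.imJ_mul, Quaternion.imK_mul] <;> simp [e1, e2, e3]
lemma e2e3 : e2 * e3 = e1 := by ext <;> simp [Quaternion.re_mul, Quaternion.imI_mul, Quaternion.imJ_mul, Quaternion.imK_mul] <;> simp [e1, e2, e3]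
lemma e3e2 : e3 * e2 = -e1 := by ext <;> simp [Quaternion.re_mul, Quaternion.imI_mul, Quaternion.imJ_mul, Quaternion.imK_mul] <;> simp [e1, e2, e3]
lemma e3e1 : e3 * e1 = e2 := by ext <;> simp [Quaternion.re_mul, Quaternion.imI_mul, Quaternion.imJ_mul, Quaternion.imK_mul] <;> simp [e1, e2, e3]
lemma e1e3 : e1 * e3 = -e2 := by ext <;> simp [Quaternion.re_mul, Quaternion.imI_mul, Quaternion.imJ_mul, Quaternion.imK_mul] <;> simp [e1, e2, e3]

theorem Dbar_sq_sub_two_Dbar (σ : ℍ[ℝ] → ℍ[ℝ]) (hσ : ContDiff ℝ 2 σ) :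
    Dbar (Dbar σ) - (2 : ℝ) • Dbar σ
      = -(Lop e1 (Lop e1 σ) + Lop e2 (Lop e2 σ) + Lop e3 (Lop e3 σ)) := by
  have hσ1 : ContDiff ℝ 1 (fderiv ℝ σ) := hσ.fderiv_right (by norm_num)
  have hd : Differentiable ℝ σ := hσ.differentiable two_ne_zero
  have hd1 : Differentiable ℝ (fderiv ℝ σ) := hσ1.differentiable one_ne_zero
  -- derivative of `Lop v σ`
  have hasL : ∀ (v : ℍ[ℝ]) (y : ℍ[ℝ]),
      HasFDerivAt (Lop v σ)
        ((fderiv ℝ σ y).comp ((ContinuousLinearMap.id ℝ ℍ[ℝ]).smulRight v)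
          + (fderiv ℝ (fderiv ℝ σ) y).flip (y * v)) y := by
    intro v y
    exact (hd1 y).hasFDerivAt.clm_apply ((hasFDerivAt_id y).mul_const' v)
  -- value of iterated Lop
  have LL : ∀ (v w : ℍ[ℝ]) (x : ℍ[ℝ]),
      Lop w (Lop v σ) x
        = fderiv ℝ σ x ((x * w) * v) + fderiv ℝ (fderiv ℝ σ) x (x * w) (x * v) := by
    intro v w x
    show fderiv ℝ (Lop v σ) x (x * w) = _
    rw [(hasL v x).fderiv]
    simp [ContinuousLinearMap.smulRight_apply, smul_eq_mul]
  have LDbar : ∀ (w x : ℍ[ℝ]),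
      Lop w (Dbar σ) x
        = -((fderiv ℝ σ x ((x * w) * e1) + fderiv ℝ (fderiv ℝ σ) x (x * w) (x * e1)) * e1
          + (fderiv ℝ σ x ((x * w) * e2) + fderiv ℝ (fderiv ℝ σ) x (x * w) (x * e2)) * e2
          + (fderiv ℝ σ x ((x * w) * e3) + fderiv ℝ (fderiv ℝ σ) x (x * w) (x * e3)) * e3) := by
    intro w x
    have h : HasFDerivAt (Dbar σ)
        (-((((fderiv ℝ σ x).comp ((ContinuousLinearMap.id ℝ ℍ[ℝ]).smulRight e1)
          + (fderiv ℝ (fderiv ℝ σ) x).flip (x * e1)).smulRight e1)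
        + (((fderiv ℝ σ x).comp ((ContinuousLinearMap.id ℝ ℍ[ℝ]).smulRight e2)
          + (fderiv ℝ (fderiv ℝ σ) x).flip (x * e2)).smulRight e2)
        + (((fderiv ℝ σ x).comp ((ContinuousLinearMap.id ℝ ℍ[ℝ]).smulRight e3)
          + (fderiv ℝ (fderiv ℝ σ) x).flip (x * e3)).smulRight e3))) x := by
      exact ((((hasL e1 x).mul_const' e1).add ((hasL e2 x).mul_const' e2)).add
        ((hasL e3 x).mul_const' e3)).neg
    show fderiv ℝ (Dbar σ) x (x * w) = _
    rw [h.fderiv]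
    simp [ContinuousLinearMap.smulRight_apply, smul_eq_mul]
  -- symmetry of the second derivative
  funext x
  have hsym : ∀ v w : ℍ[ℝ],
      fderiv ℝ (fderiv ℝ σ) x v w = fderiv ℝ (fderiv ℝ σ) x w v :=
    second_derivative_symmetric (fun y => (hd y).hasFDerivAt) (hd1 x).hasFDerivAt
  have hDval : Dbar σ x
      = -(fderiv ℝ σ x (x * e1) * e1 + fderiv ℝ σ x (x * e2) * e2
          + fderiv ℝ σ x (x * e3) * e3) := rfl
  show Dbar (Dbar σ) x - (2 : ℝ) • Dbar σ x = _
  have : Dbar (Dbar σ) x = -(Lop e1 (Dbar σ) x * e1 + Lop e2 (Dbar σ) x * e2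
      + Lop e3 (Dbar σ) x * e3) := rfl
  rw [this, LDbar e1 x, LDbar e2 x, LDbar e3 x, hDval]
  show _ = -(Lop e1 (Lop e1 σ) x + Lop e2 (Lop e2 σ) x + Lop e3 (Lop e3 σ) x)
  rw [LL e1 e1 x, LL e2 e2 x, LL e3 e3 x]
  rw [hsym (x * e2) (x * e1), hsym (x * e3) (x * e1), hsym (x * e3) (x * e2)]
  simp only [mul_assoc, e1e1, e1e2, e1e3, e2e1, e2e2, e2e3, e3e1, e3e2, e3e3,
    mul_neg, mul_neg_one, mul_one, map_neg, neg_neg, neg_mul, neg_add_rev, add_mul,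
    two_smul]
  abel
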